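/- Uniform bound on QDP fixed points: for every λ ∈ [0,1]^{X×[m]}, the fixed point θ̂^π_λ of Π^λ T^π satisfies ‖θ̂^π_λ‖_∞ ≤ (1/(1−γ)) · max( |min_{x∈X} F⁻¹_{R^π(x)}(1/(2m))|, |max_{x∈X} F̄⁻¹_{R^π(x)}((2m−1)/(2m))| ), where R^π(x) denotes the reward distribution at state x under π. -/

import Mathlib

open MeasureTheory ProbabilityTheory Set
open scoped ENNReal

/-- Generalized inverse CDF (least τ-quantile). -/
noncomputable def invCDF (ν : Measure ℝ) (τ : ℝ) : ℝ := sInf {y | τ ≤ cdf ν y}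

/-- Upper inverse CDF (greatest τ-quantile). -/
noncomputable def upInvCDF (ν : Measure ℝ) (τ : ℝ) : ℝ := sInf {y | τ < cdf ν y}

/-- Quantile level τ_i = (2i-1)/(2m), with `i : Fin m` zero-indexed. -/
noncomputable def qlevel (m : ℕ) (i : Fin m) : ℝ := (2 * (i : ℝ) + 1) / (2 * m)

/-- The uniform m-atom distribution with the given particle locations. -/
noncomputable def paramDistOne {m : ℕ} (θ : Fin m → ℝ) : Measure ℝ :=
  (m : ℝ≥0∞)⁻¹ • ∑ i : Fin m, Measure.dirac (θ i)

/-- Return-distribution function associated with quantile parameters θ. -/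
noncomputable def paramDist {X : Type*} {m : ℕ} (θ : X → Fin m → ℝ) : X → Measure ℝ :=
  fun x => paramDistOne (θ x)

/-- The distributional Bellman operator T^π. -/
noncomputable def bellman {X : Type*} [MeasurableSpace X]
    (P : X → Measure (ℝ × X)) (γ : ℝ) (η : X → Measure ℝ) : X → Measure ℝ :=
  fun x => (P x).bind (fun p => (η p.2).map (fun z => p.1 + γ * z))

/-- The quantile projection Π^λ, parameter-level output. -/
noncomputable def projParam {X : Type*} {m : ℕ} (lam : X → Fin m → ℝ)
    (η : X → Measure ℝ) : X → Fin m → ℝ :=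
  fun x i => (1 - lam x i) * invCDF (η x) (qlevel m i) + lam x i * upInvCDF (η x) (qlevel m i)

/-- The quantile projection Π^λ on return-distribution functions. -/
noncomputable def proj {X : Type*} {m : ℕ} (lam : X → Fin m → ℝ)
    (η : X → Measure ℝ) : X → Measure ℝ :=
  paramDist (projParam lam η)

/-- The projected distributional Bellman operator Π^λ T^π acting on parameters. -/
noncomputable def projBellmanParam {X : Type*} [MeasurableSpace X]
    (P : X → Measure (ℝ × X)) (γ : ℝ) {m : ℕ} (lam : X → Fin m → ℝ)
    (θ : X → Fin m → ℝ) : X → Fin m → ℝ :=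
  projParam lam (bellman P γ (paramDist θ))

/-- The cube [0,1]^{X×[m]} of interpolation parameters. -/
def unitCube (X : Type*) (m : ℕ) : Set (X → Fin m → ℝ) :=
  {lam | ∀ x i, lam x i ∈ Set.Icc (0:ℝ) 1}

/-- Wasserstein-∞ distance (valued in [0,∞]). -/
noncomputable def winf (ν ν' : Measure ℝ) : ℝ≥0∞ :=
  ⨆ t : Set.Ioo (0:ℝ) 1, ENNReal.ofReal |invCDF ν t - invCDF ν' t|

/-- Extension of w∞ to return-distribution functions: max over states. -/
noncomputable def wbar {X : Type*} (η η' : X → Measure ℝ) : ℝ≥0∞ :=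
  ⨆ x : X, winf (η x) (η' x)

/-- Wasserstein-1 distance between probability distributions on ℝ. -/
noncomputable def w1 (ν ν' : Measure ℝ) : ℝ :=
  ∫ t in Set.Ioo (0:ℝ) 1, |invCDF ν t - invCDF ν' t|

/-- Uniform m-atom distributions. -/
noncomputable def FQ (m : ℕ) : Set (Measure ℝ) :=
  {ν | ∃ z : Fin m → ℝ, ν = paramDistOne z}

open Filter

section Aux
variable {ν ρ : Measure ℝ} {τ τ' c : ℝ}

lemma qS_nonempty (ν : Measure ℝ) (hτ : τ < 1) : {y | τ ≤ cdf ν y}.Nonempty :=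
  ((tendsto_cdf_atTop ν).eventually (eventually_ge_nhds hτ)).exists

lemma qT_nonempty (ν : Measure ℝ) (hτ : τ < 1) : {y | τ < cdf ν y}.Nonempty :=
  ((tendsto_cdf_atTop ν).eventually (eventually_gt_nhds hτ)).exists

lemma qS_bddBelow (ν : Measure ℝ) (hτ : 0 < τ) : BddBelow {y | τ ≤ cdf ν y} := by
  obtain ⟨b, hb⟩ := (eventually_atBot).mp ((tendsto_cdf_atBot ν).eventually (eventually_lt_nhds hτ))
  exact ⟨b, fun y hy => le_of_not_ge fun h => absurd hy (not_le.mpr (hb y h))⟩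

lemma qT_bddBelow (ν : Measure ℝ) (hτ : 0 < τ) : BddBelow {y | τ < cdf ν y} :=
  (qS_bddBelow ν hτ).mono (fun y hy => (le_of_lt hy : τ ≤ cdf ν y))

lemma invCDF_mono (ν : Measure ℝ) (hτ0 : 0 < τ) (hτ'1 : τ' < 1) (h : τ ≤ τ') :
    invCDF ν τ ≤ invCDF ν τ' :=
  csInf_le_csInf (qS_bddBelow ν hτ0) (qS_nonempty ν hτ'1) (fun _ hy => le_trans h hy)

lemma upInvCDF_mono (ν : Measure ℝ) (hτ0 : 0 < τ) (hτ'1 : τ' < 1) (h : τ ≤ τ') :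
    upInvCDF ν τ ≤ upInvCDF ν τ' :=
  csInf_le_csInf (qT_bddBelow ν hτ0) (qT_nonempty ν hτ'1) (fun _ hy => lt_of_le_of_lt h hy)

lemma invCDF_le_upInvCDF (ν : Measure ℝ) (hτ0 : 0 < τ) (hτ1 : τ < 1) :
    invCDF ν τ ≤ upInvCDF ν τ :=
  csInf_le_csInf (qS_bddBelow ν hτ0) (qT_nonempty ν hτ1) (fun y hy => (le_of_lt hy : τ ≤ cdf ν y))

lemma invCDF_shift (hτ0 : 0 < τ) (hτ1 : τ < 1)
    (h : ∀ y, cdf ν y ≤ cdf ρ (y + c)) : invCDF ρ τ - c ≤ invCDF ν τ := by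
  refine le_csInf (qS_nonempty ν hτ1) (fun y hy => ?_)
  have h1 : y + c ∈ {y | τ ≤ cdf ρ y} := le_trans hy (h y)
  have h2 := csInf_le (qS_bddBelow ρ hτ0) h1
  have h3 : invCDF ρ τ ≤ y + c := h2
  linarith

lemma upInvCDF_shift (hτ0 : 0 < τ) (hτ1 : τ < 1)
    (h : ∀ y, cdf ρ y ≤ cdf ν (y + c)) : upInvCDF ν τ ≤ upInvCDF ρ τ + c := by
  have h1 : upInvCDF ν τ - c ≤ upInvCDF ρ τ := by
    refine le_csInf (qT_nonempty ρ hτ1) fun y hy => ?_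
    have h2 : y + c ∈ {y | τ < cdf ν y} := lt_of_lt_of_le hy (h y)
    have h3 : upInvCDF ν τ ≤ y + c := csInf_le (qT_bddBelow ν hτ0) h2
    linarith
  linarith
end Aux


lemma paramDistOne_map_apply {m : ℕ} (z : Fin m → ℝ) (f : ℝ → ℝ) (hf : Measurable f)
    {s : Set ℝ} (hs : MeasurableSet s) :
    ((paramDistOne z).map f) s = (m : ℝ≥0∞)⁻¹ * ∑ i : Fin m, s.indicator 1 (f (z i)) := by
  rw [paramDistOne, Measure.map_apply hf hs, Measure.smul_apply,
    Measure.finset_sum_apply]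
  simp only [Measure.dirac_apply' _ (hf hs), smul_eq_mul]
  rfl

lemma bellman_param_apply {X : Type*} [MeasurableSpace X] [Countable X]
    [MeasurableSingletonClass X]
    (P : X → Measure (ℝ × X)) (γ : ℝ) {m : ℕ} (θ : X → Fin m → ℝ) (x : X)
    {s : Set ℝ} (hs : MeasurableSet s) :
    bellman P γ (paramDist θ) x s
      = ∫⁻ p, (m : ℝ≥0∞)⁻¹ * ∑ i : Fin m, s.indicator 1 (p.1 + γ * θ p.2 i) ∂(P x) := by
  have hfmeas : ∀ p : ℝ × X, Measurable fun z : ℝ => p.1 + γ * z := fun p =>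
    measurable_const.add (measurable_id.const_mul γ)
  have hker : Measurable fun p : ℝ × X => (paramDistOne (θ p.2)).map (fun z => p.1 + γ * z) := by
    refine Measure.measurable_of_measurable_coe _ fun t ht => ?_
    have heq : ∀ p : ℝ × X, ((paramDistOne (θ p.2)).map (fun z => p.1 + γ * z)) t
        = (m : ℝ≥0∞)⁻¹ * ∑ i : Fin m, t.indicator 1 (p.1 + γ * θ p.2 i) := fun p =>
      paramDistOne_map_apply _ _ (hfmeas p) ht
    simp only [heq]
    refine Measurable.const_mul (Finset.measurable_sum _ fun i _ => ?_) _
    exact (measurable_one.indicator ht).comp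
      (measurable_fst.add (((measurable_of_countable fun x => θ x i).comp
        measurable_snd).const_mul γ))
  show ((P x).bind fun p => (paramDistOne (θ p.2)).map fun z => p.1 + γ * z) s = _
  rw [Measure.bind_apply hs hker.aemeasurable]
  exact lintegral_congr fun p => paramDistOne_map_apply _ _ (hfmeas p) hs

lemma bellman_param_prob {X : Type*} [MeasurableSpace X] [Countable X]
    [MeasurableSingletonClass X]
    (P : X → Measure (ℝ × X)) (hP : ∀ x, IsProbabilityMeasure (P x)) (γ : ℝ)
    {m : ℕ} (hm : 0 < m) (θ : X → Fin m → ℝ) (x : X) :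
    IsProbabilityMeasure (bellman P γ (paramDist θ) x) := by
  constructor
  rw [bellman_param_apply P γ θ x MeasurableSet.univ]
  have h1 : ∀ p : ℝ × X,
      (m : ℝ≥0∞)⁻¹ * ∑ i : Fin m, (Set.univ : Set ℝ).indicator 1 (p.1 + γ * θ p.2 i)
        = 1 := by
    intro p
    simp only [Set.indicator_univ, Pi.one_apply, Finset.sum_const, Finset.card_univ,
      Fintype.card_fin, nsmul_eq_mul, mul_one]
    exact ENNReal.inv_mul_cancel (by exact_mod_cast hm.ne') (ENNReal.natCast_ne_top m)
  simp only [h1]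
  haveI := hP x
  simp

lemma bellman_cdf_ub {X : Type*} [MeasurableSpace X] [Countable X]
    [MeasurableSingletonClass X]
    (P : X → Measure (ℝ × X)) {γ : ℝ} (hγ0 : 0 ≤ γ) {m : ℕ} (hm : 0 < m)
    (θ : X → Fin m → ℝ) {M : ℝ} (hM : ∀ x i, |θ x i| ≤ M) (x : X) (y : ℝ) :
    bellman P γ (paramDist θ) x (Iic y) ≤ ((P x).map Prod.fst) (Iic (y + γ * M)) := by
  rw [bellman_param_apply P γ θ x measurableSet_Iic,
    Measure.map_apply measurable_fst measurableSet_Iic]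
  have key : ∀ p : ℝ × X,
      (m : ℝ≥0∞)⁻¹ * ∑ i : Fin m, (Iic y).indicator 1 (p.1 + γ * θ p.2 i)
        ≤ (Prod.fst ⁻¹' Iic (y + γ * M)).indicator (1 : ℝ × X → ℝ≥0∞) p := by
    intro p
    by_cases hp : p.1 ≤ y + γ * M
    · have hmem : p ∈ Prod.fst ⁻¹' Iic (y + γ * M) := hp
      rw [Set.indicator_of_mem hmem]
      calc (m : ℝ≥0∞)⁻¹ * ∑ i : Fin m, (Iic y).indicator 1 (p.1 + γ * θ p.2 i)
          ≤ (m : ℝ≥0∞)⁻¹ * ∑ _i : Fin m, 1 := by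
            gcongr with i
            by_cases h : p.1 + γ * θ p.2 i ∈ Iic y
            · rw [Set.indicator_of_mem h]; exact le_rfl
            · rw [Set.indicator_of_notMem h]; exact zero_le
        _ = 1 := by
            simp only [Finset.sum_const, Finset.card_univ, Fintype.card_fin,
              nsmul_eq_mul, mul_one]
            exact ENNReal.inv_mul_cancel (by exact_mod_cast hm.ne') (ENNReal.natCast_ne_top m)
        _ = (1 : ℝ × X → ℝ≥0∞) p := rfl
    · have hnm : p ∉ Prod.fst ⁻¹' Iic (y + γ * M) := hp
      rw [Set.indicator_of_notMem hnm]
      have hz : ∀ i : Fin m, (Iic y).indicator (1 : ℝ → ℝ≥0∞) (p.1 + γ * θ p.2 i) = 0 := by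
        intro i
        apply Set.indicator_of_notMem
        rw [Set.mem_Iic, not_le]
        push_neg at hp
        have hθ : -M ≤ θ p.2 i := neg_le_of_abs_le (hM _ _)
        nlinarith [mul_le_mul_of_nonneg_left hθ hγ0]
      simp [hz]
  refine le_trans (lintegral_mono key) ?_
  rw [lintegral_indicator_one (measurable_fst measurableSet_Iic)]

lemma bellman_cdf_lb {X : Type*} [MeasurableSpace X] [Countable X]
    [MeasurableSingletonClass X]
    (P : X → Measure (ℝ × X)) {γ : ℝ} (hγ0 : 0 ≤ γ) {m : ℕ} (hm : 0 < m)
    (θ : X → Fin m → ℝ) {M : ℝ} (hM : ∀ x i, |θ x i| ≤ M) (x : X) (y : ℝ) :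
    ((P x).map Prod.fst) (Iic y) ≤ bellman P γ (paramDist θ) x (Iic (y + γ * M)) := by
  rw [bellman_param_apply P γ θ x measurableSet_Iic,
    Measure.map_apply measurable_fst measurableSet_Iic]
  have key : ∀ p : ℝ × X,
      (Prod.fst ⁻¹' Iic y).indicator (1 : ℝ × X → ℝ≥0∞) p
        ≤ (m : ℝ≥0∞)⁻¹ * ∑ i : Fin m, (Iic (y + γ * M)).indicator 1 (p.1 + γ * θ p.2 i) := by
    intro p
    by_cases hp : p.1 ≤ y
    · have hone : ∀ i : Fin m,
          (Iic (y + γ * M)).indicator (1 : ℝ → ℝ≥0∞) (p.1 + γ * θ p.2 i) = 1 := by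
        intro i
        apply Set.indicator_of_mem
        rw [Set.mem_Iic]
        have hθ : θ p.2 i ≤ M := le_of_abs_le (hM _ _)
        nlinarith [mul_le_mul_of_nonneg_left hθ hγ0]
      have hmem : p ∈ Prod.fst ⁻¹' Iic y := hp
      rw [Set.indicator_of_mem hmem]
      simp only [hone, Pi.one_apply, Finset.sum_const, Finset.card_univ, Fintype.card_fin,
        nsmul_eq_mul, mul_one]
      rw [ENNReal.inv_mul_cancel (by exact_mod_cast hm.ne') (ENNReal.natCast_ne_top m)]
    · have hnm : p ∉ Prod.fst ⁻¹' Iic y := hp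
      rw [Set.indicator_of_notMem hnm]
      exact zero_le
  refine le_trans ?_ (lintegral_mono key)
  rw [lintegral_indicator_one (measurable_fst measurableSet_Iic)]


set_option maxHeartbeats 1000000 in
/-- Uniform bound on QDP fixed points:
`‖θ̂^π_λ‖_∞ ≤ (1/(1−γ)) · max(|min_x F⁻¹_{R^π(x)}(1/(2m))|, |max_x F̄⁻¹_{R^π(x)}((2m−1)/(2m))|)`,
where `R^π(x)` is the reward marginal of `P^π(·|x)`. -/
theorem qdp_fixed_point_bound
    {X : Type*} [Fintype X] [Nonempty X] [MeasurableSpace X] [MeasurableSingletonClass X]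
    (P : X → Measure (ℝ × X)) (hP : ∀ x, IsProbabilityMeasure (P x))
    (hPmean : ∀ x, Integrable (fun p : ℝ × X => p.1) (P x))
    (γ : ℝ) (hγ0 : 0 ≤ γ) (hγ1 : γ < 1) {m : ℕ} (hm : 0 < m)
    (lam : X → Fin m → ℝ) (hlam : lam ∈ unitCube X m)
    (θhat : X → Fin m → ℝ) (hfix : projBellmanParam P γ lam θhat = θhat) :
    ‖θhat‖ ≤ (1 / (1 - γ)) *
      max |⨅ x : X, invCDF ((P x).map Prod.fst) (1 / (2 * (m:ℝ)))|
          |⨆ x : X, upInvCDF ((P x).map Prod.fst) ((2 * (m:ℝ) - 1) / (2 * (m:ℝ)))| := by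
  classical
  haveI : ∀ x, IsProbabilityMeasure (P x) := hP
  haveI hRprob : ∀ x : X, IsProbabilityMeasure ((P x).map Prod.fst) := fun x =>
    Measure.isProbabilityMeasure_map measurable_fst.aemeasurable
  set M : ℝ := ‖θhat‖ with hMdef
  have hM0 : 0 ≤ M := norm_nonneg _
  have hMbd : ∀ x i, |θhat x i| ≤ M := fun x i => by
    calc |θhat x i| = ‖θhat x i‖ := (Real.norm_eq_abs _).symm
      _ ≤ ‖θhat x‖ := norm_le_pi_norm (θhat x) i
      _ ≤ M := norm_le_pi_norm θhat x
  have hm' : (0:ℝ) < m := by exact_mod_cast hm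
  have h2m : (0:ℝ) < 2 * m := by linarith
  have hm1 : (1:ℝ) ≤ m := by exact_mod_cast hm
  set τlo : ℝ := 1 / (2 * (m:ℝ)) with hτloeq
  set τhi : ℝ := (2 * (m:ℝ) - 1) / (2 * (m:ℝ)) with hτhieq
  have hτlo0 : 0 < τlo := by rw [hτloeq]; positivity
  have hτlo1 : τlo < 1 := by rw [hτloeq, div_lt_one h2m]; linarith
  have hτhi0 : 0 < τhi := by rw [hτhieq]; exact div_pos (by linarith) h2m
  have hτhi1 : τhi < 1 := by rw [hτhieq, div_lt_one h2m]; linarith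
  set rmin : ℝ := ⨅ x : X, invCDF ((P x).map Prod.fst) τlo with hrmineq
  set rmax : ℝ := ⨆ x : X, upInvCDF ((P x).map Prod.fst) τhi with hrmaxeq
  set C : ℝ := max |rmin| |rmax| with hCeq
  have key : ∀ (x : X) (i : Fin m),
      rmin - γ * M ≤ θhat x i ∧ θhat x i ≤ rmax + γ * M := by
    intro x i
    haveI hν : IsProbabilityMeasure (bellman P γ (paramDist θhat) x) :=
      bellman_param_prob P hP γ hm θhat x
    have him : ((i:ℕ):ℝ) + 1 ≤ (m:ℝ) := by exact_mod_cast Nat.succ_le_of_lt i.isLt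
    have hi0 : (0:ℝ) ≤ ((i:ℕ):ℝ) := Nat.cast_nonneg _
    have hτ0 : 0 < qlevel m i := by rw [qlevel]; exact div_pos (by linarith) h2m
    have hτ1 : qlevel m i < 1 := by rw [qlevel, div_lt_one h2m]; linarith
    have hτlo_le : τlo ≤ qlevel m i := by
      rw [hτloeq, qlevel, div_le_div_iff₀ h2m h2m]; nlinarith
    have hτhi_ge : qlevel m i ≤ τhi := by
      rw [hτhieq, qlevel, div_le_div_iff₀ h2m h2m]; nlinarith
    have hub : ∀ y, cdf (bellman P γ (paramDist θhat) x) y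
        ≤ cdf ((P x).map Prod.fst) (y + γ * M) := fun y => by
      rw [cdf_eq_real, cdf_eq_real]
      exact ENNReal.toReal_mono (measure_ne_top _ _) (bellman_cdf_ub P hγ0 hm θhat hMbd x y)
    have hlb : ∀ y, cdf ((P x).map Prod.fst) y
        ≤ cdf (bellman P γ (paramDist θhat) x) (y + γ * M) := fun y => by
      rw [cdf_eq_real, cdf_eq_real]
      exact ENNReal.toReal_mono (measure_ne_top _ _) (bellman_cdf_lb P hγ0 hm θhat hMbd x y)
    have hA : rmin - γ * M ≤ invCDF (bellman P γ (paramDist θhat) x) (qlevel m i) := by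
      have h1 := invCDF_shift (c := γ * M) hτ0 hτ1 hub
      have h2 : invCDF ((P x).map Prod.fst) τlo ≤ invCDF ((P x).map Prod.fst) (qlevel m i) :=
        invCDF_mono _ hτlo0 hτ1 hτlo_le
      have h3 : rmin ≤ invCDF ((P x).map Prod.fst) τlo := by
        rw [hrmineq]
        exact ciInf_le (Set.Finite.bddBelow (Set.finite_range (fun x : X => invCDF ((P x).map Prod.fst) τlo))) x
      linarith
    have hB : upInvCDF (bellman P γ (paramDist θhat) x) (qlevel m i) ≤ rmax + γ * M := by
      have h1 := upInvCDF_shift (c := γ * M) hτ0 hτ1 hlb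
      have h2 : upInvCDF ((P x).map Prod.fst) (qlevel m i) ≤ upInvCDF ((P x).map Prod.fst) τhi :=
        upInvCDF_mono _ hτ0 hτhi1 hτhi_ge
      have h3 : upInvCDF ((P x).map Prod.fst) τhi ≤ rmax := by
        rw [hrmaxeq]
        exact le_ciSup (Set.Finite.bddAbove (Set.finite_range (fun x : X => upInvCDF ((P x).map Prod.fst) τhi))) x
      linarith
    have hAB : invCDF (bellman P γ (paramDist θhat) x) (qlevel m i)
        ≤ upInvCDF (bellman P γ (paramDist θhat) x) (qlevel m i) :=
      invCDF_le_upInvCDF _ hτ0 hτ1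
    have hfx : θhat x i
        = (1 - lam x i) * invCDF (bellman P γ (paramDist θhat) x) (qlevel m i)
          + lam x i * upInvCDF (bellman P γ (paramDist θhat) x) (qlevel m i) := by
      have h := congrFun (congrFun hfix x) i
      simp only [projBellmanParam, projParam] at h
      exact h.symm
    obtain ⟨hl0, hl1⟩ := hlam x i
    constructor
    · rw [hfx]
      nlinarith [mul_nonneg hl0 (sub_nonneg.2 hAB)]
    · rw [hfx]
      nlinarith [mul_nonneg (sub_nonneg.2 hl1) (sub_nonneg.2 hAB)]
  have hC0 : (0:ℝ) ≤ C := le_trans (abs_nonneg _) (le_max_left _ _)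
  have habs : ∀ x i, |θhat x i| ≤ C + γ * M := by
    intro x i
    obtain ⟨h1, h2⟩ := key x i
    rw [abs_le]
    have hn : -|rmin| ≤ rmin := neg_abs_le rmin
    have hC1 : |rmin| ≤ C := le_max_left _ _
    have hp : rmax ≤ |rmax| := le_abs_self rmax
    have hC2 : |rmax| ≤ C := le_max_right _ _
    constructor <;> linarith
  have hMC : M ≤ C + γ * M := by
    have hnn : (0:ℝ) ≤ C + γ * M := by nlinarith
    rw [hMdef]
    refine (pi_norm_le_iff_of_nonneg hnn).2 fun x => ?_
    refine (pi_norm_le_iff_of_nonneg hnn).2 fun i => ?_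
    rw [Real.norm_eq_abs]
    exact habs x i
  have h1γ : (0:ℝ) < 1 - γ := by linarith
  rw [one_div, ← div_eq_inv_mul, le_div_iff₀ h1γ]
  nlinarith
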